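/- Let V₁, …, V_d be C¹ vector fields on ℝ^e, let f = (f¹, …, f^d) : [0,T] → ℝ^d be C¹, and suppose u : ℝ^e × [0,T] → ℝ^e satisfies: u(x, 0) = x for all x; for each x ∈ ℝ^e the map t ↦ u(x, t) is differentiable with ∂ₜu(x, t) = Σ_{i=1}^d (f^i)′(t) Vᵢ(u(x, t)); u is continuous; for each t ∈ [0,T] the map x ↦ u(x, t) is (Fréchet) differentiable; and the derivative D_x u : ℝ^e × [0,T] → L(ℝ^e, ℝ^e) is continuous. Then for each x ∈ ℝ^e the map t ↦ D_x u(x, t) is differentiable on [0,T], with D_x u(x, 0) = id and ∂ₜ D_x u(x, t) = (Σ_{i=1}^d (f^i)′(t) (DVᵢ)(u(x, t))) ∘ D_x u(x, t) for all t; that is, the Jacobian of the flow of the controlled ODE solves the forward variational (linear) ODE. -/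

import Mathlib

open Set

set_option maxHeartbeats 1000000 in
/-- The Jacobian `D_x u(x, t)` of the flow `u(x, ·)` of the controlled ODE
`∂ₜ u(x,t) = Σᵢ (fⁱ)′(t) Vᵢ(u(x,t))` satisfies the forward variational (linear) ODE
`∂ₜ D_x u(x, t) = (Σᵢ (fⁱ)′(t) (DVᵢ)(u(x,t))) ∘ D_x u(x, t)` with `D_x u(x, 0) = id`. -/
theorem stmt7 {d e : ℕ} (hd : 1 ≤ d) (he : 1 ≤ e) {T : ℝ} (hT : 0 < T)
    (V : Fin d → (Fin e → ℝ) → (Fin e → ℝ)) (hV : ∀ i, ContDiff ℝ 1 (V i))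
    (f f' : ℝ → Fin d → ℝ)
    (hf : ∀ t ∈ Icc (0 : ℝ) T, HasDerivWithinAt f (f' t) (Icc 0 T) t)
    (hf' : ContinuousOn f' (Icc 0 T))
    (u : (Fin e → ℝ) → ℝ → Fin e → ℝ)
    (hu0 : ∀ x, u x 0 = x)
    (hut : ∀ x, ∀ t ∈ Icc (0 : ℝ) T,
      HasDerivWithinAt (u x) (∑ i, f' t i • V i (u x t)) (Icc 0 T) t)
    (hucont : ContinuousOn (fun p : (Fin e → ℝ) × ℝ => u p.1 p.2)
      (univ ×ˢ Icc (0 : ℝ) T))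
    (Du : (Fin e → ℝ) → ℝ → (Fin e → ℝ) →L[ℝ] (Fin e → ℝ))
    (hDu : ∀ t ∈ Icc (0 : ℝ) T, ∀ x, HasFDerivAt (fun x => u x t) (Du x t) x)
    (hDucont : ContinuousOn (fun p : (Fin e → ℝ) × ℝ => Du p.1 p.2)
      (univ ×ˢ Icc (0 : ℝ) T)) :
    ∀ x : Fin e → ℝ,
      Du x 0 = ContinuousLinearMap.id ℝ (Fin e → ℝ) ∧
      ∀ t ∈ Icc (0 : ℝ) T,
        HasDerivWithinAt (fun t => Du x t)
          ((∑ i, f' t i • fderiv ℝ (V i) (u x t)).comp (Du x t)) (Icc 0 T) t := by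
  -- notation
  set F : (Fin e → ℝ) → ℝ → (Fin e → ℝ) := fun y s => ∑ i, f' s i • V i (u y s) with hF
  set G : (Fin e → ℝ) → ℝ → (Fin e → ℝ) →L[ℝ] (Fin e → ℝ) :=
    fun y s => ∑ i, f' s i • ((fderiv ℝ (V i) (u y s)).comp (Du y s)) with hG
  have h0T : (0 : ℝ) ∈ Icc (0 : ℝ) T := ⟨le_refl 0, hT.le⟩
  -- continuity of `s ↦ u y s` on `Icc 0 T` for fixed `y`
  have huyc : ∀ y, ContinuousOn (fun s => u y s) (Icc (0 : ℝ) T) := fun y =>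
    hucont.comp (continuous_const.prodMk continuous_id).continuousOn
      (fun s hs => ⟨mem_univ _, hs⟩)
  -- continuity of `s ↦ F y s` on `Icc 0 T` for fixed `y`
  have hFc : ∀ y, ContinuousOn (fun s => F y s) (Icc (0 : ℝ) T) := by
    intro y
    apply continuousOn_finset_sum
    intro i _
    exact (((continuous_apply i).comp_continuousOn hf')).smul
      ((hV i).continuous.comp_continuousOn (huyc y))
  -- joint continuity of `G`
  have hGcont : ContinuousOn (fun p : (Fin e → ℝ) × ℝ => G p.1 p.2)
      (univ ×ˢ Icc (0 : ℝ) T) := by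
    apply continuousOn_finset_sum
    intro i _
    have h1 : ContinuousOn (fun p : (Fin e → ℝ) × ℝ => f' p.2 i)
        (univ ×ˢ Icc (0 : ℝ) T) :=
      (continuous_apply i).comp_continuousOn
        (hf'.comp continuous_snd.continuousOn (fun p hp => hp.2))
    have h2 : ContinuousOn (fun p : (Fin e → ℝ) × ℝ => fderiv ℝ (V i) (u p.1 p.2))
        (univ ×ˢ Icc (0 : ℝ) T) :=
      ((hV i).continuous_fderiv one_ne_zero).comp_continuousOn hucont
    exact h1.smul (h2.clm_comp hDucont)
  have hGc : ∀ y, ContinuousOn (fun s => G y s) (Icc (0 : ℝ) T) := fun y =>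
    hGcont.comp (continuous_const.prodMk continuous_id).continuousOn
      (fun s hs => ⟨mem_univ _, hs⟩)
  -- integral representation of `u`
  have hrep : ∀ t ∈ Icc (0 : ℝ) T, ∀ y, u y t = y + ∫ s in (0 : ℝ)..t, F y s := by
    intro t ht y
    have hsub : Icc (0 : ℝ) t ⊆ Icc (0 : ℝ) T := Icc_subset_Icc le_rfl ht.2
    have hint : IntervalIntegrable (F y) MeasureTheory.volume 0 t := by
      apply ContinuousOn.intervalIntegrable
      rw [uIcc_of_le ht.1]
      exact (hFc y).mono hsub
    have := intervalIntegral.integral_eq_sub_of_hasDeriv_right_of_le ht.1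
      ((huyc y).mono hsub)
      (fun s hs => by
        have hs' : s ∈ Icc (0 : ℝ) T := hsub (Ioo_subset_Icc_self hs)
        have : HasDerivAt (u y) (F y s) s := by
          apply (hut y s hs').hasDerivAt
          exact Icc_mem_nhds (lt_of_lt_of_le hs.1 le_rfl) (lt_of_lt_of_le hs.2 ht.2)
        exact this.hasDerivWithinAt)
      hint
    rw [this, hu0]
    abel
  intro x
  -- the initial condition
  have hDu0 : Du x 0 = ContinuousLinearMap.id ℝ (Fin e → ℝ) := by
    have h1 : HasFDerivAt (fun y => u y 0) (Du x 0) x := hDu 0 h0T x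
    have h2 : HasFDerivAt (fun y : Fin e → ℝ => u y 0)
        (ContinuousLinearMap.id ℝ (Fin e → ℝ)) x := by
      have : (fun y : Fin e → ℝ => u y 0) = id := funext hu0
      rw [this]; exact hasFDerivAt_id x
    exact h1.unique h2
  refine ⟨hDu0, ?_⟩
  -- uniform bound on `G` near `x`
  obtain ⟨C, hC⟩ : ∃ C, ∀ p ∈ (Metric.closedBall x 1) ×ˢ Icc (0 : ℝ) T,
      ‖G p.1 p.2‖ ≤ C := by
    apply IsCompact.exists_bound_of_continuousOn
      ((isCompact_closedBall x 1).prod isCompact_Icc)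
    exact hGcont.mono (prod_mono (subset_univ _) subset_rfl)
  -- identify `Du x t` with the integral formula
  have hkey : ∀ t ∈ Icc (0 : ℝ) T,
      Du x t = ContinuousLinearMap.id ℝ (Fin e → ℝ) + ∫ s in (0 : ℝ)..t, G x s := by
    intro t ht
    have hsub : Icc (0 : ℝ) t ⊆ Icc (0 : ℝ) T := Icc_subset_Icc le_rfl ht.2
    have hIsub : Set.uIoc (0 : ℝ) t ⊆ Icc (0 : ℝ) T := by
      rw [uIoc_of_le ht.1]; exact (Ioc_subset_Icc_self).trans hsub
    have hmeasI : MeasurableSet (Set.uIoc (0 : ℝ) t) := measurableSet_uIoc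
    have hmain : HasFDerivAt (fun y => ∫ s in (0 : ℝ)..t, F y s)
        (∫ s in (0 : ℝ)..t, G x s) x := by
      apply intervalIntegral.hasFDerivAt_integral_of_dominated_of_fderiv_le
        (bound := fun _ => C) (s := Metric.ball x 1) (Metric.ball_mem_nhds x one_pos)
      · filter_upwards with y
        exact (((hFc y).mono hIsub)).aestronglyMeasurable hmeasI
      · apply ContinuousOn.intervalIntegrable
        rw [uIcc_of_le ht.1]
        exact (hFc x).mono hsub
      · exact ((hGc x).mono hIsub).aestronglyMeasurable hmeasI
      · filter_upwards with s hs y hy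
        exact hC (y, s) ⟨Metric.ball_subset_closedBall hy, hIsub hs⟩
      · exact intervalIntegrable_const
      · filter_upwards with s hs y _
        have hs' : s ∈ Icc (0 : ℝ) T := hIsub hs
        have : ∀ i : Fin d, HasFDerivAt (fun y => f' s i • V i (u y s))
            (f' s i • ((fderiv ℝ (V i) (u y s)).comp (Du y s))) y := by
          intro i
          exact (((hV i).differentiable one_ne_zero (u y s)).hasFDerivAt.comp y
            (hDu s hs' y)).const_smul (f' s i)
        exact HasFDerivAt.fun_sum (fun i _ => this i)
    have h1 : HasFDerivAt (fun y => u y t)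
        (ContinuousLinearMap.id ℝ (Fin e → ℝ) + ∫ s in (0 : ℝ)..t, G x s) x := by
      have heq : (fun y => u y t) = fun y => y + ∫ s in (0 : ℝ)..t, F y s :=
        funext (fun y => hrep t ht y)
      rw [heq]
      exact (hasFDerivAt_id x).add hmain
    exact (hDu t ht x).unique h1
  -- the variational ODE via FTC
  intro t ht
  haveI : Fact (t ∈ Icc (0 : ℝ) T) := ⟨ht⟩
  have hint : IntervalIntegrable (G x) MeasureTheory.volume 0 t := by
    apply ContinuousOn.intervalIntegrable
    rw [uIcc_of_le ht.1]
    exact (hGc x).mono (Icc_subset_Icc le_rfl ht.2)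
  have hmeas : StronglyMeasurableAtFilter (G x) (nhdsWithin t (Icc (0 : ℝ) T)) :=
    ⟨Icc 0 T, self_mem_nhdsWithin, (hGc x).aestronglyMeasurable measurableSet_Icc⟩
  have hftc : HasDerivWithinAt (fun r => ∫ s in (0 : ℝ)..r, G x s) (G x t)
      (Icc (0 : ℝ) T) t :=
    intervalIntegral.integral_hasDerivWithinAt_right hint hmeas ((hGc x) t ht)
  have hderiv : HasDerivWithinAt (fun r => Du x r) (G x t) (Icc (0 : ℝ) T) t := by
    apply HasDerivWithinAt.congr (hftc.const_add (ContinuousLinearMap.id ℝ (Fin e → ℝ)))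
    · intro r hr; exact hkey r hr
    · exact hkey t ht
  have : (∑ i, f' t i • fderiv ℝ (V i) (u x t)).comp (Du x t) = G x t := by
    rw [hG, ContinuousLinearMap.finset_sum_comp]
    exact Finset.sum_congr rfl fun i _ => ContinuousLinearMap.smul_comp _ _ _
  rw [this]
  exact hderiv
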